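/- Let T ⊆ Q[x_1,...,x_n] be a strong chain and f ∈ Q[x_1,...,x_n]. If V(T) ∩ V(f) is nonempty, then there exists a polynomial g ∈ C[x_1,...,x_n] with g ∉ <T> such that f·g ∈ <T>; that is, f is a zero divisor modulo <T>. -/

import Mathlib

open MvPolynomial
set_option synthInstance.maxHeartbeats 1000000
set_option maxHeartbeats 1000000
set_option linter.unusedVariables false

def IsStrongChain {n : ℕ} (T : Fin n → MvPolynomial (Fin n) ℚ) : Prop :=
  ∀ i : Fin n,
    (∀ j ∈ (T i).vars, j ≤ i) ∧ 1 ≤ MvPolynomial.degreeOf i (T i) ∧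
    ∃ c : ℚ, c ≠ 0 ∧
      MvPolynomial.degreeOf i (T i - C c * X i ^ (MvPolynomial.degreeOf i (T i)))
        < MvPolynomial.degreeOf i (T i)

noncomputable def toC {n : ℕ} (f : MvPolynomial (Fin n) ℚ) : MvPolynomial (Fin n) ℂ :=
  MvPolynomial.map (algebraMap ℚ ℂ) f


variable {n : ℕ}

noncomputable def splitAt (i : Fin n) :
    MvPolynomial (Fin n) ℂ →ₐ[ℂ] Polynomial (MvPolynomial (Fin n) ℂ) :=
  MvPolynomial.aeval (fun j => if j = i then Polynomial.X else Polynomial.C (MvPolynomial.X j))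

theorem splitAt_C (i : Fin n) (a : ℂ) :
    splitAt i (MvPolynomial.C a) = Polynomial.C (MvPolynomial.C a) := by
  simp [splitAt, MvPolynomial.algebraMap_eq]

theorem splitAt_X_self (i : Fin n) : splitAt i (MvPolynomial.X i) = Polynomial.X := by
  simp [splitAt]

theorem eval_splitAt (i : Fin n) (f : MvPolynomial (Fin n) ℂ) :
    Polynomial.eval (MvPolynomial.X i) (splitAt i f) = f := by
  have : (Polynomial.evalRingHom (MvPolynomial.X i : MvPolynomial (Fin n) ℂ)).comp
      (splitAt i).toRingHom = RingHom.id _ := by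
    apply MvPolynomial.ringHom_ext
    · intro a; simp [splitAt, MvPolynomial.algebraMap_eq]
    · intro j
      by_cases hj : j = i <;> simp [splitAt, hj]
  exact congrFun (congrArg (fun g => g.toFun) this) f

theorem natDegree_splitAt_le (i : Fin n) (f : MvPolynomial (Fin n) ℂ) :
    (splitAt i f).natDegree ≤ MvPolynomial.degreeOf i f := by
  conv_lhs => rw [f.as_sum]
  rw [map_sum]
  apply Polynomial.natDegree_sum_le_of_forall_le _ _ (fun m hm => ?_)
  have hmi : m i ≤ MvPolynomial.degreeOf i f := by
    rw [MvPolynomial.degreeOf_eq_sup]; exact Finset.le_sup (f := fun m => m i) hm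
  refine le_trans ?_ hmi
  rw [MvPolynomial.monomial_eq, map_mul, splitAt_C]
  refine le_trans (Polynomial.natDegree_mul_le) ?_
  simp only [Polynomial.natDegree_C, zero_add]
  rw [Finsupp.prod, map_prod]
  refine le_trans (Polynomial.natDegree_prod_le _ _) ?_
  by_cases hi : i ∈ m.support
  · rw [← Finset.add_sum_erase _ _ hi]
    have h1 : ((splitAt i) (MvPolynomial.X i ^ m i)).natDegree ≤ m i := by
      rw [map_pow, splitAt_X_self]
      simp [Polynomial.natDegree_X_pow]
    have h2 : (∑ j ∈ m.support.erase i, ((splitAt i) (MvPolynomial.X j ^ m j)).natDegree) = 0 := by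
      refine Finset.sum_eq_zero fun j hj => ?_
      have hji : j ≠ i := (Finset.mem_erase.1 hj).1
      simp [splitAt, hji, Polynomial.natDegree_pow]
    omega
  · refine le_trans (le_of_eq (Finset.sum_eq_zero fun j hj => ?_)) (Nat.zero_le _)
    have hji : j ≠ i := fun h => hi (h ▸ hj)
    simp [splitAt, hji, Polynomial.natDegree_pow]

theorem coeff_splitAt_mem (i : Fin n) (s : Set (Fin n)) (f : MvPolynomial (Fin n) ℂ)
    (hf : f ∈ MvPolynomial.supported ℂ s) (k : ℕ) :
    (splitAt i f).coeff k ∈ MvPolynomial.supported ℂ (s \ {i}) := by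
  revert k
  rw [MvPolynomial.mem_supported] at hf
  have hf' : f ∈ Algebra.adjoin ℂ (MvPolynomial.X '' s) :=
    (MvPolynomial.mem_supported.2 hf : _)
  clear hf
  induction hf' using Algebra.adjoin_induction with
  | mem x hx =>
    obtain ⟨j, hj, rfl⟩ := hx
    intro k
    by_cases hji : j = i
    · subst hji
      rw [splitAt_X_self]
      rcases eq_or_ne k 1 with rfl | hk
      · rw [Polynomial.coeff_X_one]
        exact Subalgebra.one_mem _
      · rw [Polynomial.coeff_X, if_neg (Ne.symm hk)]
        exact Subalgebra.zero_mem _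
    · have : splitAt i (MvPolynomial.X j) = Polynomial.C (MvPolynomial.X j) := by
        simp [splitAt, hji]
      rw [this]
      rcases eq_or_ne k 0 with rfl | hk
      · simp only [Polynomial.coeff_C_zero]
        exact Algebra.subset_adjoin ⟨j, ⟨hj, hji⟩, rfl⟩
      · rw [Polynomial.coeff_C, if_neg hk]
        exact Subalgebra.zero_mem _
  | algebraMap a =>
    intro k
    have : splitAt i ((algebraMap ℂ _) a) = Polynomial.C (MvPolynomial.C a) := by
      simp [MvPolynomial.algebraMap_eq, splitAt_C]
    rw [this]
    rcases eq_or_ne k 0 with rfl | hk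
    · simpa [MvPolynomial.algebraMap_eq] using Subalgebra.algebraMap_mem (MvPolynomial.supported ℂ (s \ {i})) a
    · rw [Polynomial.coeff_C, if_neg hk]
      exact Subalgebra.zero_mem _
  | add x y hx hy ihx ihy =>
    intro k
    rw [map_add, Polynomial.coeff_add]
    exact Subalgebra.add_mem _ (ihx k) (ihy k)
  | mul x y hx hy ihx ihy =>
    intro k
    rw [map_mul, Polynomial.coeff_mul]
    exact Subalgebra.sum_mem _ fun p hp => Subalgebra.mul_mem _ (ihx p.1) (ihy p.2)

theorem degreeOf_toC_le (i : Fin n) (f : MvPolynomial (Fin n) ℚ) :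
    MvPolynomial.degreeOf i (toC f) ≤ MvPolynomial.degreeOf i f := by
  rw [MvPolynomial.degreeOf_eq_sup, MvPolynomial.degreeOf_eq_sup]
  exact Finset.sup_mono (MvPolynomial.support_map_subset _ _)

theorem monic_key (i : Fin n) (Ti : MvPolynomial (Fin n) ℚ)
    (hd : 1 ≤ MvPolynomial.degreeOf i Ti) (c : ℚ) (hc : c ≠ 0)
    (hlt : MvPolynomial.degreeOf i
        (Ti - MvPolynomial.C c * MvPolynomial.X i ^ MvPolynomial.degreeOf i Ti)
      < MvPolynomial.degreeOf i Ti) :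
    (Polynomial.C (MvPolynomial.C (((c : ℂ))⁻¹)) * splitAt i (toC Ti)).Monic := by
  set d := MvPolynomial.degreeOf i Ti with hdd
  set g := Ti - MvPolynomial.C c * MvPolynomial.X i ^ d with hg
  have hsplit : toC Ti = toC g + MvPolynomial.C ((c : ℂ)) * MvPolynomial.X i ^ d := by
    simp only [hg, toC, map_sub, map_mul, map_pow, MvPolynomial.map_C, MvPolynomial.map_X,
      eq_ratCast]
    ring
  have hcC : ((c : ℂ)) ≠ 0 := by exact_mod_cast hc
  have key : Polynomial.C (MvPolynomial.C (((c : ℂ))⁻¹)) * splitAt i (toC Ti)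
      = Polynomial.X ^ d + Polynomial.C (MvPolynomial.C (((c : ℂ))⁻¹)) * splitAt i (toC g) := by
    rw [hsplit, map_add, map_mul, map_pow, splitAt_C, splitAt_X_self, mul_add,
      ← mul_assoc, ← Polynomial.C_mul, ← MvPolynomial.C_mul, inv_mul_cancel₀ hcC]
    simp [add_comm]
  rw [key]
  apply Polynomial.monic_X_pow_add
  have h1 : (Polynomial.C (MvPolynomial.C (((c : ℂ))⁻¹)) * splitAt i (toC g)).natDegree < d := by
    calc (Polynomial.C (MvPolynomial.C (((c : ℂ))⁻¹)) * splitAt i (toC g)).natDegree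
        ≤ (splitAt i (toC g)).natDegree := Polynomial.natDegree_C_mul_le _ _
      _ ≤ MvPolynomial.degreeOf i (toC g) := natDegree_splitAt_le _ _
      _ ≤ MvPolynomial.degreeOf i g := degreeOf_toC_le _ _
      _ < d := hlt
  exact lt_of_le_of_lt (Polynomial.degree_le_natDegree) (by exact_mod_cast h1)

theorem quotient_finite {n : ℕ} (T : Fin n → MvPolynomial (Fin n) ℚ)
    (hT : IsStrongChain T) :
    Module.Finite ℂ
      (MvPolynomial (Fin n) ℂ ⧸ Ideal.span (Set.range fun i => toC (T i))) := by
  set I : Ideal (MvPolynomial (Fin n) ℂ) := Ideal.span (Set.range fun i => toC (T i)) with hI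
  let mkA : MvPolynomial (Fin n) ℂ →ₐ[ℂ] _ := Ideal.Quotient.mkₐ ℂ I
  set xb : Fin n → (MvPolynomial (Fin n) ℂ ⧸ I) := fun j => mkA (MvPolynomial.X j) with hxb
  have key : ∀ m : ℕ, ∀ i : Fin n, i.val < m → IsIntegral ℂ (xb i) := by
    intro m
    induction m with
    | zero => intro i h; omega
    | succ m IH =>
      intro i him
      obtain ⟨hvars, hd, c, hc, hlt⟩ := hT i
      set S : Subalgebra ℂ (MvPolynomial (Fin n) ℂ ⧸ I) :=
        Algebra.adjoin ℂ (xb '' {j | j < i}) with hS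
      have hfg : (Subalgebra.toSubmodule S).FG := by
        refine fg_adjoin_of_finite ((Set.toFinite _).image _) ?_
        rintro _ ⟨j, hj, rfl⟩
        refine IH j ?_
        have : (j : ℕ) < (i : ℕ) := hj
        omega
      haveI hSfin : Module.Finite ℂ ↥S := Module.Finite.iff_fg.2 hfg
      -- the monic polynomial
      set q : Polynomial (MvPolynomial (Fin n) ℂ) :=
        Polynomial.C (MvPolynomial.C (((c : ℂ))⁻¹)) * splitAt i (toC (T i)) with hq
      have hqm : q.Monic := monic_key i (T i) hd c hc hlt
      set qR : Polynomial (MvPolynomial (Fin n) ℂ ⧸ I) := q.map (Ideal.Quotient.mk I) with hqR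
      have hqRm : qR.Monic := hqm.map _
      have hcoeff : ∀ k, qR.coeff k ∈ S := by
        intro k
        rw [hqR, Polynomial.coeff_map]
        have h1 : q.coeff k ∈ MvPolynomial.supported ℂ ({j | j ≤ i} \ {i}) := by
          rw [hq, Polynomial.coeff_C_mul]
          refine Subalgebra.mul_mem _ ?_ ?_
          · rw [← MvPolynomial.algebraMap_eq]
            exact Subalgebra.algebraMap_mem _ _
          · refine coeff_splitAt_mem i _ _ ?_ k
            rw [MvPolynomial.mem_supported]
            intro j hj
            exact hvars j (MvPolynomial.vars_map _ _ hj)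
        have h2 : Ideal.Quotient.mk I (q.coeff k) = mkA (q.coeff k) := rfl
        rw [h2]
        have h3 : mkA (q.coeff k) ∈ (MvPolynomial.supported ℂ ({j | j ≤ i} \ {i})).map mkA :=
          Subalgebra.mem_map.2 ⟨_, h1, rfl⟩
        rw [MvPolynomial.supported, AlgHom.map_adjoin] at h3
        refine Algebra.adjoin_mono ?_ h3
        rintro _ ⟨_, ⟨j, hj, rfl⟩, rfl⟩
        exact ⟨j, lt_of_le_of_ne hj.1 hj.2, rfl⟩
      have hsub : (↑qR.coeffs : Set (MvPolynomial (Fin n) ℂ ⧸ I)) ⊆ (S.toSubring : Set _) := by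
        intro x hx
        obtain ⟨k, -, rfl⟩ := Polynomial.mem_coeffs_iff.1 hx
        exact hcoeff k
      have hxiS : IsIntegral ↥S (xb i) := by
        refine ⟨qR.toSubring S.toSubring hsub, (Polynomial.monic_toSubring _ _ _).2 hqRm, ?_⟩
        have halg : algebraMap ↥S (MvPolynomial (Fin n) ℂ ⧸ I) = S.toSubring.subtype := rfl
        rw [halg, Polynomial.eval₂_eq_eval_map, Polynomial.map_toSubring]
        have : xb i = Ideal.Quotient.mk I (MvPolynomial.X i) := rfl
        rw [hqR, this, Polynomial.eval_map, Polynomial.eval₂_hom]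
        rw [Ideal.Quotient.eq_zero_iff_mem]
        have : Polynomial.eval (MvPolynomial.X i) q
            = MvPolynomial.C (((c : ℂ))⁻¹) * toC (T i) := by
          rw [hq, Polynomial.eval_mul, Polynomial.eval_C, eval_splitAt]
        rw [this]
        exact Ideal.mul_mem_left _ _ (Ideal.subset_span ⟨i, rfl⟩)
      exact isIntegral_trans (xb i) hxiS
  have key' : ∀ i : Fin n, IsIntegral ℂ (xb i) := fun i => key n i i.isLt
  have htop : Algebra.adjoin ℂ (Set.range xb) = ⊤ := by
    have h1 : Set.range xb = mkA '' (Set.range MvPolynomial.X) := by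
      rw [← Set.range_comp]; rfl
    rw [h1, ← AlgHom.map_adjoin, MvPolynomial.adjoin_range_X, Algebra.map_top,
      AlgHom.range_eq_top]
    exact Ideal.Quotient.mkₐ_surjective ℂ I
  refine Module.finite_def.2 ?_
  rw [← Algebra.top_toSubmodule, ← htop]
  exact fg_adjoin_of_finite (Set.finite_range _) (by rintro _ ⟨i, rfl⟩; exact key' i)

/-- if `T` is a strong chain, `f ∈ ℚ[x_1,...,x_n]` and `V(T) ∩ V(f) ≠ ∅`,
then `f` is a zero divisor modulo `⟨T⟩` in `ℂ[x_1,...,x_n]`: there is `g ∉ ⟨T⟩` with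
`f·g ∈ ⟨T⟩`. -/
theorem stmt_7 {n : ℕ} (T : Fin n → MvPolynomial (Fin n) ℚ) (hT : IsStrongChain T)
    (f : MvPolynomial (Fin n) ℚ)
    (hmeet : ∃ p : Fin n → ℂ,
      (∀ i : Fin n, MvPolynomial.eval p (toC (T i)) = 0) ∧ MvPolynomial.eval p (toC f) = 0) :
    ∃ g : MvPolynomial (Fin n) ℂ,
      g ∉ Ideal.span (Set.range fun i => toC (T i)) ∧
      toC f * g ∈ Ideal.span (Set.range fun i => toC (T i)) := by
  obtain ⟨p, hpT, hpf⟩ := hmeet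
  by_contra hcon
  push_neg at hcon
  set I : Ideal (MvPolynomial (Fin n) ℂ) := Ideal.span (Set.range fun i => toC (T i)) with hI
  have hdiv : ∀ g, toC f * g ∈ I → g ∈ I := by
    intro g hg
    by_contra hgI
    exact hcon g hgI hg
  haveI hfin : Module.Finite ℂ (MvPolynomial (Fin n) ℂ ⧸ I) := quotient_finite T hT
  haveI : FiniteDimensional ℂ (MvPolynomial (Fin n) ℂ ⧸ I) := hfin
  set fb : MvPolynomial (Fin n) ℂ ⧸ I := Ideal.Quotient.mk I (toC f) with hfb
  set L : (MvPolynomial (Fin n) ℂ ⧸ I) →ₗ[ℂ] (MvPolynomial (Fin n) ℂ ⧸ I) :=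
    LinearMap.mulLeft ℂ fb with hL
  have hinj : Function.Injective L := by
    rw [← LinearMap.ker_eq_bot, eq_bot_iff]
    rintro x hx
    rw [LinearMap.mem_ker, hL, LinearMap.mulLeft_apply] at hx
    obtain ⟨g, rfl⟩ := Ideal.Quotient.mk_surjective x
    rw [hfb, ← map_mul, Ideal.Quotient.eq_zero_iff_mem] at hx
    rw [Submodule.mem_bot, Ideal.Quotient.eq_zero_iff_mem]
    exact hdiv g hx
  obtain ⟨y, hy⟩ := (LinearMap.injective_iff_surjective).1 hinj 1
  obtain ⟨g, rfl⟩ := Ideal.Quotient.mk_surjective y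
  rw [hL, LinearMap.mulLeft_apply, hfb, ← map_mul, show (1 : MvPolynomial (Fin n) ℂ ⧸ I)
    = Ideal.Quotient.mk I 1 from rfl, Ideal.Quotient.eq] at hy
  have hev : MvPolynomial.eval p (toC f * g - 1) = 0 := by
    have hIle : I ≤ RingHom.ker (MvPolynomial.eval p) := by
      rw [hI, Ideal.span_le]
      rintro _ ⟨i, rfl⟩
      exact hpT i
    exact hIle hy
  rw [map_sub, map_mul, hpf, map_one, zero_mul, zero_sub] at hev
  exact one_ne_zero (neg_eq_zero.1 hev)
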